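/- For the Funk metric F on the unit ball and any constant vector a ∈ ℝⁿ with |a| < 1, the function F̃(x,y) = ((1 − ⟨a,x⟩)F² − ⟨a,y⟩F)/√(|y|² − (|x|²|y|² − ⟨x,y⟩²)) equals F + Σᵢ F_{xⁱ}(xⁱ − aⁱ) = F + F·Σᵢ F_{yⁱ}(xⁱ − aⁱ), for |x| < 1 and y ≠ 0. -/

import Mathlib

open scoped RealInnerProductSpace

/-- The Funk metric of the unit ball in ℝⁿ. -/
noncomputable def funkF {n : ℕ} (x y : EuclideanSpace ℝ (Fin n)) : ℝ :=
  (Real.sqrt (‖y‖ ^ 2 - (‖x‖ ^ 2 * ‖y‖ ^ 2 - ⟪x, y⟫ ^ 2)) + ⟪x, y⟫) / (1 - ‖x‖ ^ 2)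

lemma key_x {n : ℕ} (x y : EuclideanSpace ℝ (Fin n)) (hx : ‖x‖ < 1) (hy : y ≠ 0)
    (v : EuclideanSpace ℝ (Fin n)) :
    fderiv ℝ (fun x' => funkF x' y) x v =
      funkF x y * (⟪y, v⟫ + funkF x y * ⟪x, v⟫)
        / Real.sqrt (‖y‖ ^ 2 - (‖x‖ ^ 2 * ‖y‖ ^ 2 - ⟪x, y⟫ ^ 2)) := by
  have hx2 : (0:ℝ) < 1 - ‖x‖^2 := by nlinarith [norm_nonneg x]
  have hd : (1:ℝ) - ‖x‖^2 ≠ 0 := ne_of_gt hx2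
  have hy0 : (0:ℝ) < ‖y‖ := norm_pos_iff.2 hy
  have hy2 : (0:ℝ) < ‖y‖^2 := by positivity
  have hS : (0:ℝ) < ‖y‖ ^ 2 - (‖x‖ ^ 2 * ‖y‖ ^ 2 - ⟪x, y⟫ ^ 2) := by
    nlinarith [sq_nonneg (⟪x, y⟫ : ℝ), mul_pos hx2 hy2]
  have h1 : HasFDerivAt (fun x' : EuclideanSpace ℝ (Fin n) => ‖x'‖^2) (2 • (innerSL ℝ x)) x :=
    (hasStrictFDerivAt_norm_sq x).hasFDerivAt
  have h1' : HasFDerivAt (fun x' : EuclideanSpace ℝ (Fin n) => ‖x'‖*‖x'‖) (2 • (innerSL ℝ x)) x := by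
    simpa only [pow_two] using h1
  have h2 : HasFDerivAt (fun x' : EuclideanSpace ℝ (Fin n) => (⟪x', y⟫:ℝ)) (innerSL ℝ y) x := by
    have hfun : (fun x' : EuclideanSpace ℝ (Fin n) => (⟪x', y⟫:ℝ)) = ⇑(innerSL ℝ y) := by
      funext z; rw [innerSL_apply_apply]; exact real_inner_comm y z
    rw [hfun]; exact (innerSL ℝ y).hasFDerivAt
  have hSne : ‖y‖*‖y‖ - (‖x‖*‖x‖*(‖y‖*‖y‖) - ⟪x,y⟫*⟪x,y⟫) ≠ 0 := by
    nlinarith [hS]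
  have hg := (hasFDerivAt_const ((‖y‖:ℝ)*‖y‖) x).sub ((h1'.mul_const (‖y‖*‖y‖)).sub (h2.mul h2))
  have hsqrt := hg.sqrt hSne
  have hden := (hasFDerivAt_const (1:ℝ) x).sub h1'
  have hinv := (hasDerivAt_inv (by simpa only [pow_two, Pi.sub_apply] using hd)).comp_hasFDerivAt x hden
  have hF := (hsqrt.add h2).mul hinv
  have hfe : (fun x' : EuclideanSpace ℝ (Fin n) => funkF x' y) =
      (fun x' => (Real.sqrt (‖y‖*‖y‖ - (‖x'‖*‖x'‖*(‖y‖*‖y‖) - ⟪x',y⟫*⟪x',y⟫)) + ⟪x',y⟫) *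
        ((fun t : ℝ => t⁻¹) ∘ fun x' => 1 - ‖x'‖*‖x'‖) x') := by
    funext z; simp [funkF, div_eq_mul_inv, pow_two]
  rw [hfe]; erw [hF.fderiv]
  simp only [ContinuousLinearMap.add_apply, ContinuousLinearMap.smul_apply,
    ContinuousLinearMap.sub_apply, ContinuousLinearMap.zero_apply, innerSL_apply_apply, Pi.sub_apply, Pi.mul_apply, Pi.add_apply,
    Function.comp, smul_eq_mul]
  set s := Real.sqrt (‖y‖*‖y‖ - (‖x‖*‖x‖*(‖y‖*‖y‖) - ⟪x,y⟫*⟪x,y⟫)) with hs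
  have hd' : (1:ℝ) - ‖x‖*‖x‖ ≠ 0 := by nlinarith
  have hSm : (0:ℝ) < ‖y‖*‖y‖ - (‖x‖*‖x‖*(‖y‖*‖y‖) - ⟪x,y⟫*⟪x,y⟫) := by nlinarith [hS]
  have hspos : 0 < s := by rw [hs]; exact Real.sqrt_pos.2 hSm
  have hss : s * s = ‖y‖*‖y‖ - (‖x‖*‖x‖*(‖y‖*‖y‖) - ⟪x,y⟫*⟪x,y⟫) := by
    rw [hs]; exact Real.mul_self_sqrt (le_of_lt hSm)
  have hEq : Real.sqrt (‖y‖ ^ 2 - (‖x‖ ^ 2 * ‖y‖ ^ 2 - ⟪x,y⟫ ^ 2)) = s := by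
    rw [hs]; norm_num [pow_two]
  simp only [funkF]
  rw [hEq]
  simp only [pow_two, nsmul_eq_mul]
  clear hF hfe hsqrt hg hinv hden h1 h1' h2 hEq hs hS hSm hSne hy0 hy2 hx2 hd hx hy
  clear_value s
  generalize (⟪y,v⟫:ℝ) = B
  generalize (⟪x,v⟫:ℝ) = A
  generalize hp : (⟪x,y⟫:ℝ) = p at hss ⊢
  generalize hq : ‖x‖ = q at hd' hss ⊢
  generalize hr : ‖y‖ = r at hss ⊢
  have hd'' : (1:ℝ) - q^2 ≠ 0 := by rw [pow_two]; exact hd'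
  field_simp
  linear_combination (2*A) * hss

lemma key_y {n : ℕ} (x y : EuclideanSpace ℝ (Fin n)) (hx : ‖x‖ < 1) (hy : y ≠ 0)
    (v : EuclideanSpace ℝ (Fin n)) :
    fderiv ℝ (fun y' => funkF x y') y v =
      (⟪y, v⟫ + funkF x y * ⟪x, v⟫)
        / Real.sqrt (‖y‖ ^ 2 - (‖x‖ ^ 2 * ‖y‖ ^ 2 - ⟪x, y⟫ ^ 2)) := by
  have hx2 : (0:ℝ) < 1 - ‖x‖^2 := by nlinarith [norm_nonneg x]
  have hd : (1:ℝ) - ‖x‖^2 ≠ 0 := ne_of_gt hx2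
  have hy0 : (0:ℝ) < ‖y‖ := norm_pos_iff.2 hy
  have hy2 : (0:ℝ) < ‖y‖^2 := by positivity
  have hS : (0:ℝ) < ‖y‖ ^ 2 - (‖x‖ ^ 2 * ‖y‖ ^ 2 - ⟪x, y⟫ ^ 2) := by
    nlinarith [sq_nonneg (⟪x, y⟫ : ℝ), mul_pos hx2 hy2]
  have k1 : HasFDerivAt (fun y' : EuclideanSpace ℝ (Fin n) => ‖y'‖*‖y'‖) (2 • (innerSL ℝ y)) y := by
    simpa only [pow_two] using (hasStrictFDerivAt_norm_sq y).hasFDerivAt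
  have k2 : HasFDerivAt (fun y' : EuclideanSpace ℝ (Fin n) => (⟪x, y'⟫:ℝ)) (innerSL ℝ x) y := by
    have hfun : (fun y' : EuclideanSpace ℝ (Fin n) => (⟪x, y'⟫:ℝ)) = ⇑(innerSL ℝ x) := by
      funext z; rw [innerSL_apply_apply]
    rw [hfun]; exact (innerSL ℝ x).hasFDerivAt
  have hSne : ‖y‖*‖y‖ - (‖x‖*‖x‖*(‖y‖*‖y‖) - ⟪x,y⟫*⟪x,y⟫) ≠ 0 := by nlinarith [hS]
  have kg := k1.sub ((k1.const_mul (‖x‖*‖x‖)).sub (k2.mul k2))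
  have ksqrt := kg.sqrt hSne
  have kF := (ksqrt.add k2).mul_const ((1 - ‖x‖*‖x‖)⁻¹)
  have hfe : (fun y' : EuclideanSpace ℝ (Fin n) => funkF x y') =
      (fun y' => (Real.sqrt (‖y'‖*‖y'‖ - (‖x‖*‖x‖*(‖y'‖*‖y'‖) - ⟪x,y'⟫*⟪x,y'⟫)) + ⟪x,y'⟫) *
        (1 - ‖x‖*‖x‖)⁻¹) := by
    funext z; simp [funkF, div_eq_mul_inv, pow_two]
  rw [hfe]; erw [kF.fderiv]
  simp only [ContinuousLinearMap.add_apply, ContinuousLinearMap.smul_apply,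
    ContinuousLinearMap.sub_apply, ContinuousLinearMap.zero_apply, innerSL_apply_apply, Pi.sub_apply, Pi.mul_apply, Pi.add_apply,
    smul_eq_mul]
  set s := Real.sqrt (‖y‖*‖y‖ - (‖x‖*‖x‖*(‖y‖*‖y‖) - ⟪x,y⟫*⟪x,y⟫)) with hs
  have hd' : (1:ℝ) - ‖x‖*‖x‖ ≠ 0 := by nlinarith
  have hSm : (0:ℝ) < ‖y‖*‖y‖ - (‖x‖*‖x‖*(‖y‖*‖y‖) - ⟪x,y⟫*⟪x,y⟫) := by nlinarith [hS]
  have hspos : 0 < s := by rw [hs]; exact Real.sqrt_pos.2 hSm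
  have hEq : Real.sqrt (‖y‖ ^ 2 - (‖x‖ ^ 2 * ‖y‖ ^ 2 - ⟪x,y⟫ ^ 2)) = s := by
    rw [hs]; norm_num [pow_two]
  simp only [funkF]
  rw [hEq]
  simp only [pow_two, nsmul_eq_mul]
  clear hfe kF ksqrt kg k1 k2 hEq hs hS hSm hSne hy0 hy2 hx2 hd hx hy
  clear_value s
  generalize (⟪y,v⟫:ℝ) = B
  generalize (⟪x,v⟫:ℝ) = A
  generalize hp : (⟪x,y⟫:ℝ) = p
  generalize hq : ‖x‖ = q at hd' ⊢
  have hd'' : (1:ℝ) - q^2 ≠ 0 := by rw [pow_two]; exact hd'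
  field_simp
  ring

lemma sum_repr {n : ℕ} (L : EuclideanSpace ℝ (Fin n) →L[ℝ] ℝ) (x a : EuclideanSpace ℝ (Fin n)) :
    ∑ i, L (EuclideanSpace.single i 1) * (x i - a i) = L (x - a) := by
  have hv : (x - a) = ∑ i, (x i - a i) • EuclideanSpace.single i (1:ℝ) := by
    ext j
    classical
    have h1 : (∑ i, (x i - a i) • EuclideanSpace.single i (1:ℝ)) j
        = ∑ i, ((x i - a i) • EuclideanSpace.single i (1:ℝ)) j :=
      by rw [WithLp.ofLp_sum, Finset.sum_apply]
    rw [h1]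
    simp [EuclideanSpace.single_apply]
  rw [hv, map_sum]
  simp [mul_comm]

/-- For any `a` with `|a| < 1`, the explicit metric
`((1 - ⟨a,x⟩)F² - ⟨a,y⟩F)/√(|y|² - (|x|²|y|² - ⟨x,y⟩²))` equals
`F + Σᵢ F_{xⁱ}(xⁱ - aⁱ) = F + F·Σᵢ F_{yⁱ}(xⁱ - aⁱ)`. -/
theorem funk_tilde_a_formula {n : ℕ} (a x y : EuclideanSpace ℝ (Fin n))
    (ha : ‖a‖ < 1) (hx : ‖x‖ < 1) (hy : y ≠ 0) :
    (((1 - ⟪a, x⟫) * funkF x y ^ 2 - ⟪a, y⟫ * funkF x y)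
        / Real.sqrt (‖y‖ ^ 2 - (‖x‖ ^ 2 * ‖y‖ ^ 2 - ⟪x, y⟫ ^ 2))
      = funkF x y + ∑ i,
          fderiv ℝ (fun x' => funkF x' y) x (EuclideanSpace.single i 1) * (x i - a i)) ∧
    (funkF x y + ∑ i,
        fderiv ℝ (fun x' => funkF x' y) x (EuclideanSpace.single i 1) * (x i - a i)
      = funkF x y + funkF x y * ∑ i,
          fderiv ℝ (fun y' => funkF x y') y (EuclideanSpace.single i 1) * (x i - a i)) := by
  have hsx : ∑ i, fderiv ℝ (fun x' => funkF x' y) x (EuclideanSpace.single i 1) * (x i - a i)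
      = fderiv ℝ (fun x' => funkF x' y) x (x - a) := by
    have := sum_repr (fderiv ℝ (fun x' => funkF x' y) x) x a
    simpa using this
  have hsy : ∑ i, fderiv ℝ (fun y' => funkF x y') y (EuclideanSpace.single i 1) * (x i - a i)
      = fderiv ℝ (fun y' => funkF x y') y (x - a) := by
    have := sum_repr (fderiv ℝ (fun y' => funkF x y') y) x a
    simpa using this
  rw [hsx, hsy, key_x x y hx hy (x - a), key_y x y hx hy (x - a)]
  have hx2 : (0:ℝ) < 1 - ‖x‖^2 := by nlinarith [norm_nonneg x]
  have hd : (1:ℝ) - ‖x‖^2 ≠ 0 := ne_of_gt hx2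
  have hy0 : (0:ℝ) < ‖y‖ := norm_pos_iff.2 hy
  have hy2 : (0:ℝ) < ‖y‖^2 := by positivity
  have hS : (0:ℝ) < ‖y‖ ^ 2 - (‖x‖ ^ 2 * ‖y‖ ^ 2 - ⟪x, y⟫ ^ 2) := by
    nlinarith [sq_nonneg (⟪x, y⟫ : ℝ), mul_pos hx2 hy2]
  set s := Real.sqrt (‖y‖ ^ 2 - (‖x‖ ^ 2 * ‖y‖ ^ 2 - ⟪x, y⟫ ^ 2)) with hs
  have hspos : 0 < s := by rw [hs]; exact Real.sqrt_pos.2 hS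
  have hvy : (⟪y, x - a⟫ : ℝ) = ⟪x, y⟫ - ⟪a, y⟫ := by
    rw [inner_sub_right, real_inner_comm y x, real_inner_comm y a]
  have hvx : (⟪x, x - a⟫ : ℝ) = ‖x‖^2 - ⟪a, x⟫ := by
    rw [inner_sub_right, real_inner_self_eq_norm_sq, real_inner_comm x a]
  rw [hvy, hvx]
  simp only [funkF]
  rw [← hs]
  constructor
  · clear_value s
    generalize (⟪a,y⟫:ℝ) = β
    generalize (⟪a,x⟫:ℝ) = α
    generalize (⟪x,y⟫:ℝ) = p
    generalize hq : ‖x‖ = q at hd ⊢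
    field_simp
    ring
  · clear_value s
    generalize (⟪a,y⟫:ℝ) = β
    generalize (⟪a,x⟫:ℝ) = α
    generalize (⟪x,y⟫:ℝ) = p
    generalize hq : ‖x‖ = q at hd ⊢
    field_simp
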